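/- Let (X,S) be a non-degenerate, involutive and braided set-theoretical solution on a finite set X, and let M be its structure monoid. Then M is left cancellative: for all a, b, c ∈ M, a·b = a·c implies b = c. -/

import Mathlib

namespace YBE

/-- `(X,S)` is non-degenerate: all the maps `g_x = y ↦ S(x,y).1` and
`f_y = x ↦ S(x,y).2` are bijective. -/
def Nondegenerate {X : Type*} (S : X × X → X × X) : Prop :=
  (∀ x : X, Function.Bijective fun y => (S (x, y)).1) ∧
  (∀ y : X, Function.Bijective fun x => (S (x, y)).2)

/-- `(X,S)` is involutive: `S ∘ S = id`. -/
def InvolutiveSol {X : Type*} (S : X × X → X × X) : Prop := S ∘ S = id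

/-- `S¹² = S × id` on `X × X × X`. -/
def S12 {X : Type*} (S : X × X → X × X) : X × X × X → X × X × X :=
  fun p => ((S (p.1, p.2.1)).1, (S (p.1, p.2.1)).2, p.2.2)

/-- `S²³ = id × S` on `X × X × X`. -/
def S23 {X : Type*} (S : X × X → X × X) : X × X × X → X × X × X :=
  fun p => (p.1, S (p.2.1, p.2.2))

/-- `(X,S)` is braided: `S¹² ∘ S²³ ∘ S¹² = S²³ ∘ S¹² ∘ S²³`. -/
def BraidedSol {X : Type*} (S : X × X → X × X) : Prop :=
  S12 S ∘ S23 S ∘ S12 S = S23 S ∘ S12 S ∘ S23 S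

/-- The map `g_x : y ↦ S(x,y).1`. -/
def gmap {X : Type*} (S : X × X → X × X) (x : X) : X → X := fun y => (S (x, y)).1

/-- The map `f_y : x ↦ S(x,y).2`. -/
def fmap {X : Type*} (S : X × X → X × X) (y : X) : X → X := fun x => (S (x, y)).2

/-- The inverse `g_x⁻¹` of the (bijective) map `g_x`. -/
noncomputable def ginv {X : Type*} [Nonempty X] (S : X × X → X × X) (x : X) : X → X :=
  Function.invFun (gmap S x)

/-- The inverse `f_y⁻¹` of the (bijective) map `f_y`. -/
noncomputable def finv {X : Type*} [Nonempty X] (S : X × X → X × X) (y : X) : X → X :=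
  Function.invFun (fmap S y)

/-- The defining relations of the structure monoid: `x·y = t·z` whenever `S(x,y) = (t,z)`. -/
def ybRel {X : Type*} (S : X × X → X × X) : FreeMonoid X → FreeMonoid X → Prop :=
  fun a b => ∃ x y : X, a = FreeMonoid.of x * FreeMonoid.of y ∧
    b = FreeMonoid.of (S (x, y)).1 * FreeMonoid.of (S (x, y)).2

/-- The structure monoid of `(X,S)`: the monoid presented by generating set `X` and
relations `x·y = t·z` for each `x,y,t,z` with `S(x,y) = (t,z)`. -/
abbrev StructureMonoid {X : Type*} (S : X × X → X × X) : Type _ :=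
  (conGen (ybRel S)).Quotient

/-- The image in the structure monoid of a generator `x ∈ X`. -/
def smi {X : Type*} (S : X × X → X × X) (x : X) : StructureMonoid S :=
  (conGen (ybRel S)).mk' (FreeMonoid.of x)

/-- The defining relations of the structure group, as elements of the free group. -/
def ybGRels {X : Type*} (S : X × X → X × X) : Set (FreeGroup X) :=
  {w | ∃ x y : X, w = FreeGroup.of x * FreeGroup.of y *
    (FreeGroup.of (S (x, y)).1 * FreeGroup.of (S (x, y)).2)⁻¹}

/-- The structure group of `(X,S)`: the group presented by generating set `X` and
relations `x·y = t·z` for each `x,y,t,z` with `S(x,y) = (t,z)`. -/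
abbrev StructureGroup {X : Type*} (S : X × X → X × X) : Type _ :=
  PresentedGroup (ybGRels S)

/-- `a` left-divides `b`. -/
def LDvd {M : Type*} [Monoid M] (a b : M) : Prop := ∃ c, b = a * c

/-- `m` is a right lcm of the family `a`: each `a i` left-divides `m`, and `m`
left-divides every common right multiple of the `a i`. -/
def IsRightLcm {M : Type*} [Monoid M] {ι : Sort*} (a : ι → M) (m : M) : Prop :=
  (∀ i, LDvd (a i) m) ∧ ∀ w, (∀ i, LDvd (a i) w) → LDvd m w

section Cocycle

variable {X : Type*} (S : X × X → X × X)

/-- The multiset-valued cocycle on words. -/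
def piL : List X → Multiset X
  | [] => 0
  | x :: w => x ::ₘ (piL w).map (gmap S x)

/-- The λ-map of a word: composition of the `g`-maps of its letters. -/
def lamL : List X → X → X
  | [] => id
  | x :: w => gmap S x ∘ lamL w

lemma piL_append (u v : List X) :
    piL S (u ++ v) = piL S u + (piL S v).map (lamL S u) := by
  induction u with
  | nil => simp [piL, lamL]
  | cons x u ih =>
      simp only [List.cons_append, List.append_eq, piL, lamL, ih, Multiset.map_add,
        Multiset.map_map, Multiset.cons_add, Function.comp]

lemma lamL_append (u v : List X) :
    lamL S (u ++ v) = lamL S u ∘ lamL S v := by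
  induction u with
  | nil => simp [lamL]
  | cons x u ih => simp [lamL, ih, Function.comp_assoc]

lemma piL_card (w : List X) : (piL S w).card = w.length := by
  induction w with
  | nil => simp [piL]
  | cons x w ih => simp [piL, ih]

variable {S}

lemma inv_g (hinv : InvolutiveSol S) (x y : X) :
    gmap S (S (x, y)).1 ((S (x, y)).2) = x :=
  congrArg Prod.fst (congrFun hinv (x, y))

lemma braid_g (hbr : BraidedSol S) (x y z : X) :
    gmap S (S (x, y)).1 (gmap S (S (x, y)).2 z) = gmap S x (gmap S y z) := by
  have h := congrFun hbr (x, y, z)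
  simp only [Function.comp, S12, S23] at h
  have h1 := congrArg Prod.fst h
  exact h1

lemma lam_rel (hbr : BraidedSol S) (x y : X) :
    gmap S x ∘ gmap S y = gmap S (S (x, y)).1 ∘ gmap S (S (x, y)).2 := by
  funext z
  exact (braid_g hbr x y z).symm

/-- The congruence on the free monoid given by equality of `piL` and `lamL`. -/
def piCon (S : X × X → X × X) : Con (FreeMonoid X) where
  r a b := piL S a.toList = piL S b.toList ∧ lamL S a.toList = lamL S b.toList
  iseqv := ⟨fun _ => ⟨rfl, rfl⟩, fun h => ⟨h.1.symm, h.2.symm⟩,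
    fun h h' => ⟨h.1.trans h'.1, h.2.trans h'.2⟩⟩
  mul' := by
    rintro a b c d ⟨h1, h2⟩ ⟨h3, h4⟩
    constructor
    · rw [FreeMonoid.toList_mul, FreeMonoid.toList_mul, piL_append, piL_append, h1, h2, h3]
    · rw [FreeMonoid.toList_mul, FreeMonoid.toList_mul, lamL_append, lamL_append, h2, h4]

lemma conGen_le_piCon (hinv : InvolutiveSol S) (hbr : BraidedSol S) :
    conGen (ybRel S) ≤ piCon S := by
  refine Con.conGen_le.mpr ?_
  rintro a b ⟨x, y, rfl, rfl⟩
  constructor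
  · show piL S [x, y] = piL S [(S (x, y)).1, (S (x, y)).2]
    simp only [piL, Multiset.map_cons, Multiset.map_zero, inv_g hinv x y]
    exact Multiset.cons_swap _ _ _
  · show lamL S [x, y] = lamL S [(S (x, y)).1, (S (x, y)).2]
    simp only [lamL, Function.comp_id]
    exact lam_rel hbr x y

lemma piL_eq_of_rel (hinv : InvolutiveSol S) (hbr : BraidedSol S)
    {a b : FreeMonoid X} (h : conGen (ybRel S) a b) :
    piL S a.toList = piL S b.toList :=
  (conGen_le_piCon hinv hbr h).1

lemma lamL_bijective (hnd : Nondegenerate S) (w : List X) :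
    Function.Bijective (lamL S w) := by
  induction w with
  | nil => exact Function.bijective_id
  | cons x w ih => exact (hnd.1 x).comp ih

/-- Key lemma: any member of `piL` of a word can be moved to the front. -/
lemma key_lemma (_hnd : Nondegenerate S) :
    ∀ w : List X, ∀ y ∈ piL S w, ∃ w' : List X,
      conGen (ybRel S) (FreeMonoid.ofList w) (FreeMonoid.ofList (y :: w')) := by
  intro w
  induction w with
  | nil => simp [piL]
  | cons x w ih =>
      intro y hy
      rcases Multiset.mem_cons.mp hy with h | h
      · exact ⟨w, h ▸ (conGen (ybRel S)).refl _⟩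
      · obtain ⟨z, hz, hgz⟩ := Multiset.mem_map.mp h
        obtain ⟨w'', hw''⟩ := ih z hz
        have h1 : conGen (ybRel S) (FreeMonoid.ofList (x :: w))
            (FreeMonoid.of x * FreeMonoid.ofList (z :: w'')) :=
          (conGen (ybRel S)).mul ((conGen (ybRel S)).refl (FreeMonoid.of x)) hw''
        have h2 : conGen (ybRel S) (FreeMonoid.of x * FreeMonoid.of z)
            (FreeMonoid.of (S (x, z)).1 * FreeMonoid.of (S (x, z)).2) :=
          ConGen.Rel.of _ _ ⟨x, z, rfl, rfl⟩
        have h3 : conGen (ybRel S) (FreeMonoid.of x * FreeMonoid.ofList (z :: w''))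
            (FreeMonoid.ofList ((S (x, z)).1 :: (S (x, z)).2 :: w'')) := by
          have := (conGen (ybRel S)).mul h2 ((conGen (ybRel S)).refl (FreeMonoid.ofList w''))
          simpa [mul_assoc] using this
        refine ⟨(S (x, z)).2 :: w'', ?_⟩
        have : (S (x, z)).1 = y := hgz
        rw [← this]
        exact (h1.trans h3)

/-- `piL` is injective on congruence classes. -/
lemma piL_inj (hnd : Nondegenerate S) (hinv : InvolutiveSol S) (hbr : BraidedSol S) :
    ∀ w v : List X, piL S w = piL S v →
      conGen (ybRel S) (FreeMonoid.ofList w) (FreeMonoid.ofList v) := by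
  intro w
  induction w with
  | nil =>
      intro v hv
      have : v.length = 0 := by
        rw [← piL_card S v, ← hv]; simp [piL]
      rw [List.length_eq_zero_iff.mp this]
      exact (conGen (ybRel S)).refl _
  | cons x w ih =>
      intro v hv
      have hx : x ∈ piL S v := by
        rw [← hv]; exact Multiset.mem_cons_self _ _
      obtain ⟨v'', hv''⟩ := key_lemma hnd v x hx
      have hpi : piL S v = piL S (x :: v'') := by
        simpa [FreeMonoid.toList_ofList] using piL_eq_of_rel hinv hbr hv''
      rw [hpi] at hv
      simp only [piL, Multiset.cons_inj_right] at hv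
      have hmap := Multiset.map_injective (hnd.1 x).injective hv
      have hrec := ih v'' hmap
      have : conGen (ybRel S) (FreeMonoid.ofList (x :: w)) (FreeMonoid.ofList (x :: v'')) :=
        (conGen (ybRel S)).mul ((conGen (ybRel S)).refl (FreeMonoid.of x)) hrec
      exact this.trans hv''.symm

end Cocycle

/-- The structure monoid of a non-degenerate, involutive and braided solution on a finite
set is left cancellative. -/
theorem stmt3 {X : Type*} [Finite X] (S : X × X → X × X)
    (hnd : Nondegenerate S) (hinv : InvolutiveSol S) (hbr : BraidedSol S) :
    ∀ a b c : StructureMonoid S, a * b = a * c → b = c := by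
  intro a b c h
  obtain ⟨a, rfl⟩ := Con.mk'_surjective a
  obtain ⟨b, rfl⟩ := Con.mk'_surjective b
  obtain ⟨c, rfl⟩ := Con.mk'_surjective c
  rw [← map_mul, ← map_mul] at h
  have hrel : conGen (ybRel S) (a * b) (a * c) := ((conGen (ybRel S)).eq).mp h
  have hpi := piL_eq_of_rel hinv hbr hrel
  rw [FreeMonoid.toList_mul, FreeMonoid.toList_mul, piL_append, piL_append] at hpi
  have hpi' := add_left_cancel hpi
  have hbc : piL S b.toList = piL S c.toList :=
    Multiset.map_injective (lamL_bijective hnd a.toList).injective hpi'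
  have : conGen (ybRel S) b c := by
    have := piL_inj hnd hinv hbr b.toList c.toList hbc
    simpa [FreeMonoid.ofList_toList] using this
  exact ((conGen (ybRel S)).eq).mpr this
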